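/- If p is an undecomposable semiformal pathway that has a strong closing pathway, then p has a strong closing pathway q such that the concatenation p + q is an undecomposable (formal) pathway. -/

import Mathlib

namespace CRNVerif

variable {σ : Type} [DecidableEq σ]

/-- A state is a multiset of species. -/
abbrev State (σ : Type) := Multiset σ
/-- A reaction is a pair (reactants, products) of multisets of species. -/
abbrev Reaction (σ : Type) := Multiset σ × Multiset σ
/-- A pathway is a finite sequence of reactions. -/
abbrev Pathway (σ : Type) := List (Reaction σ)

/-- Result of applying reaction `r` in state `S` (i.e. `S ⊕ r`). -/
def applyRxn (S : State σ) (r : Reaction σ) : State σ := S - r.1 + r.2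

/-- Minimal initial state of a pathway: the smallest state in which
its reactions can occur in succession. -/
def minInit : Pathway σ → State σ
  | [] => 0
  | r :: p => r.1 + (minInit p - r.2)

/-- State reached from `S` after performing all reactions of `p` in order. -/
def finalFrom (S : State σ) : Pathway σ → State σ
  | [] => S
  | r :: p => finalFrom (applyRxn S r) p

/-- The final state of a pathway (starting from its minimal initial state). -/
def finalState (p : Pathway σ) : State σ := finalFrom (minInit p) p

/-- The state `S_i` after the first `i` reactions, starting from the minimal initial state. -/
def stateAt (p : Pathway σ) (i : ℕ) : State σ := finalFrom (minInit p) (p.take i)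

/-- A state is formal if it contains only formal species (as given by `fm`). -/
def FormalState (fm : σ → Bool) (S : State σ) : Prop := ∀ x ∈ S, fm x = true

/-- `Formal(S)`: the multiset obtained by removing all intermediate species from `S`. -/
def formalPart (fm : σ → Bool) (S : State σ) : State σ := S.filter (fun x => fm x = true)

/-- A reaction is trivial if reactants equal products. -/
def TrivialRxn (r : Reaction σ) : Prop := r.1 = r.2

/-- A CRN is a (finite) set of nontrivial reactions. -/
def NontrivialRxns (C : Finset (Reaction σ)) : Prop := ∀ r ∈ C, ¬ TrivialRxn r

/-- A formal CRN contains only formal reactions. -/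
def IsFormalCRN (fm : σ → Bool) (C : Finset (Reaction σ)) : Prop :=
  ∀ r ∈ C, FormalState fm r.1 ∧ FormalState fm r.2

/-- `p` is a pathway of the CRN `C`. -/
def PathwayOf (C : Finset (Reaction σ)) (p : Pathway σ) : Prop := ∀ r ∈ p, r ∈ C

/-- `Interleave l₁ l₂ l`: `l` can be partitioned into the two (order-preserving,
not necessarily contiguous) subsequences `l₁` and `l₂`. -/
inductive Interleave {α : Type u} : List α → List α → List α → Prop
  | nil : Interleave [] [] []
  | left {a : α} {l₁ l₂ l : List α} : Interleave l₁ l₂ l → Interleave (a :: l₁) l₂ (a :: l)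
  | right {a : α} {l₁ l₂ l : List α} : Interleave l₁ l₂ l → Interleave l₁ (a :: l₂) (a :: l)

/-- `InterleaveMany qs p`: `p` is generated by interleaving the lists in `qs`. -/
inductive InterleaveMany {α : Type u} : List (List α) → List α → Prop
  | nil : InterleaveMany [] []
  | cons {q r p : List α} {qs : List (List α)} :
      Interleave q r p → InterleaveMany qs r → InterleaveMany (q :: qs) p

/-- A pathway is semiformal if its minimal initial state is formal. -/
def Semiformal (fm : σ → Bool) (p : Pathway σ) : Prop := FormalState fm (minInit p)

/-- A formal pathway: a (nonempty) pathway whose minimal initial state and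
final state are both formal. -/
def FormalPathway (fm : σ → Bool) (p : Pathway σ) : Prop :=
  p ≠ [] ∧ FormalState fm (minInit p) ∧ FormalState fm (finalState p)

/-- A formal pathway is decomposable if it can be partitioned into two nonempty
subsequences that are each formal pathways. -/
def FDecomposable (fm : σ → Bool) (p : Pathway σ) : Prop :=
  ∃ q₁ q₂, q₁ ≠ [] ∧ q₂ ≠ [] ∧ Interleave q₁ q₂ p ∧
    FormalPathway fm q₁ ∧ FormalPathway fm q₂

/-- A prime formal pathway is a formal pathway that is not decomposable. -/
def PrimePathway (fm : σ → Bool) (p : Pathway σ) : Prop :=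
  FormalPathway fm p ∧ ¬ FDecomposable fm p

/-- The formal basis: the set of (initial state, final state) pairs of prime
formal pathways of `C`. -/
def formalBasis (fm : σ → Bool) (C : Finset (Reaction σ)) : Set (Reaction σ) :=
  { r | ∃ p, PathwayOf C p ∧ PrimePathway fm p ∧ r = (minInit p, finalState p) }

/-- Two sets of reactions are equal up to addition/removal of trivial reactions. -/
def EqUpToTrivial (A B : Set (Reaction σ)) : Prop :=
  {r ∈ A | ¬ TrivialRxn r} = {r ∈ B | ¬ TrivialRxn r}

/-- The reaction at (0-based) index `j` of `p` is a turning point: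
before it only formal species of the initial state appear, from it on only formal
species of the final state appear, and at the moment the turning point fires,
no formal species are left over. -/
def TurningAt (fm : σ → Bool) (p : Pathway σ) (j : ℕ) : Prop :=
  ∃ h : j < p.length,
    (∀ i ≤ j, formalPart fm (stateAt p i) ≤ minInit p) ∧
    (∀ i, j < i → i ≤ p.length → formalPart fm (stateAt p i) ≤ finalState p) ∧
    formalPart fm (stateAt p j - (p.get ⟨j, h⟩).1) = 0

/-- A regular formal pathway: one that implements a formal reaction,
i.e. has a turning point. -/
def RegularPathway (fm : σ → Bool) (p : Pathway σ) : Prop :=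
  FormalPathway fm p ∧ ∃ j, TurningAt fm p j

/-- A CRN is regular if every prime formal pathway is regular. -/
def RegularCRN (fm : σ → Bool) (C : Finset (Reaction σ)) : Prop :=
  ∀ p, PathwayOf C p → PrimePathway fm p → RegularPathway fm p

/-- `q` is a strong closing pathway for `p` (within CRN `C`): it can occur in the
final state of `p`, consumes no formal species, and leads back to a formal state. -/
def ClosingPathway (fm : σ → Bool) (C : Finset (Reaction σ)) (p q : Pathway σ) : Prop :=
  PathwayOf C q ∧ minInit q ≤ finalState p ∧ (∀ r ∈ q, formalPart fm r.1 = 0) ∧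
  FormalState fm (finalFrom (finalState p) q)

/-- A CRN is strongly tidy if every semiformal pathway has a strong closing pathway. -/
def StronglyTidy (fm : σ → Bool) (C : Finset (Reaction σ)) : Prop :=
  ∀ p, PathwayOf C p → Semiformal fm p → ∃ q, ClosingPathway fm C p q

/-- A semiformal pathway is decomposable if it can be partitioned into two
nonempty subsequences that are each semiformal. -/
def SDecomposable (fm : σ → Bool) (p : Pathway σ) : Prop :=
  ∃ q₁ q₂, q₁ ≠ [] ∧ q₂ ≠ [] ∧ Interleave q₁ q₂ p ∧ Semiformal fm q₁ ∧ Semiformal fm q₂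

/-- The width of a pathway: the maximum size of the states it passes through. -/
def width (p : Pathway σ) : ℕ :=
  ((List.range (p.length + 1)).map (fun i => Multiset.card (stateAt p i))).foldr max 0

/-- The branching factor of a CRN. -/
def branching (C : Finset (Reaction σ)) : ℕ :=
  C.sup (fun r => max (Multiset.card r.1) (Multiset.card r.2))

/-- Formal state `T` is reachable from `S` via reactions of `C`. -/
def Reachable (C : Finset (Reaction σ)) (S T : State σ) : Prop :=
  ∃ p, PathwayOf C p ∧ minInit p ≤ S ∧ finalFrom S p = T

/-- `C` and `C'` share no intermediate species: any species occurring in both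
CRNs is formal. -/
def NoSharedIntermediates (fm : σ → Bool) (C C' : Finset (Reaction σ)) : Prop :=
  ∀ r ∈ C, ∀ r' ∈ C', ∀ x : σ, x ∈ r.1 + r.2 → x ∈ r'.1 + r'.2 → fm x = true

/-- The formal closure of a pathway: the minimal state containing the formal part
of every state along the pathway. -/
def formalClosure (fm : σ → Bool) (p : Pathway σ) : State σ :=
  ((List.range (p.length + 1)).map (fun i => formalPart fm (stateAt p i))).foldr (· ∪ ·) 0

/-- The decomposed final states of a semiformal pathway: all pairs of final
states arising from decompositions into two (nonempty) semiformal pathways. -/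
def DFS (fm : σ → Bool) (p : Pathway σ) : Set (State σ × State σ) :=
  { T | ∃ q₁ q₂, q₁ ≠ [] ∧ q₂ ≠ [] ∧ Interleave q₁ q₂ p ∧
        Semiformal fm q₁ ∧ Semiformal fm q₂ ∧ T = (finalState q₁, finalState q₂) }

/-- The minimal state containing the formal parts of all states strictly after index `j`. -/
def rfsAt (fm : σ → Bool) (p : Pathway σ) (j : ℕ) : State σ :=
  (((List.range (p.length + 1)).filter (fun i => j < i)).map
      (fun i => formalPart fm (stateAt p i))).foldr (· ∪ ·) 0

/-- The regular final states of a pathway: the minimal states `T` witnessed by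
potential turning point reactions. -/
def RFS (fm : σ → Bool) (p : Pathway σ) : Set (State σ) :=
  { T | ∃ j, ∃ h : j < p.length,
      (∀ i ≤ j, formalPart fm (stateAt p i) ≤ minInit p) ∧
      formalPart fm (stateAt p j - (p.get ⟨j, h⟩).1) = 0 ∧
      T = rfsAt fm p j }

/-- The signature of a semiformal pathway: (initial state, final state, width,
formal closure, DFS, RFS). -/
def signature (fm : σ → Bool) (p : Pathway σ) :
    State σ × State σ × ℕ × State σ × Set (State σ × State σ) × Set (State σ) :=
  (minInit p, finalState p, width p, formalClosure fm p, DFS fm p, RFS fm p)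

/-- An annotated prime pathway: exactly its chosen turning point is annotated,
with the corresponding formal basis reaction. -/
def GoodAnnotation (fm : σ → Bool) (ap : List (Reaction σ × Option (Reaction σ))) : Prop :=
  PrimePathway fm (ap.map Prod.fst) ∧
  ∃ j, TurningAt fm (ap.map Prod.fst) j ∧
    ap.map Prod.snd = (List.range ap.length).map
      (fun i => if i = j then
          some (minInit (ap.map Prod.fst), finalState (ap.map Prod.fst)) else none)

/-- `p` can be interpreted as `q`: `q` can occur in the initial state of `p`, has
the same net effect, and there is a decomposition of `p` into prime formal pathways
such that replacing a chosen turning point of each by the corresponding formal basis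
element and removing all other reactions yields `q`. -/
def Interpreted (fm : σ → Bool) (p q : Pathway σ) : Prop :=
  minInit q ≤ minInit p ∧
  finalFrom (minInit p) q = finalState p ∧
  ∃ ap : List (Reaction σ × Option (Reaction σ)),
    ap.map Prod.fst = p ∧ (ap.map Prod.snd).reduceOption = q ∧
    ∃ aps, InterleaveMany aps ap ∧ ∀ a ∈ aps, GoodAnnotation fm a


section Aux

lemma interleave_mem {α : Type u} {l₁ l₂ l : List α} (h : Interleave l₁ l₂ l) :
    ∀ x, (x ∈ l₁ → x ∈ l) ∧ (x ∈ l₂ → x ∈ l) := by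
  induction h with
  | nil => simp
  | left h ih =>
    intro x; simp only [List.mem_cons]
    exact ⟨fun hx => hx.imp id fun h' => (ih x).1 h', fun hx => Or.inr ((ih x).2 hx)⟩
  | right h ih =>
    intro x; simp only [List.mem_cons]
    exact ⟨fun hx => Or.inr ((ih x).1 hx), fun hx => hx.imp id fun h' => (ih x).2 h'⟩

lemma interleave_length {α : Type u} {l₁ l₂ l : List α} (h : Interleave l₁ l₂ l) :
    l₁.length + l₂.length = l.length := by
  induction h with
  | nil => simp
  | left h ih => simp [← ih]; omega
  | right h ih => simp [← ih]; omega

lemma interleave_swap {α : Type u} {l₁ l₂ l : List α} (h : Interleave l₁ l₂ l) :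
    Interleave l₂ l₁ l := by
  induction h with
  | nil => exact .nil
  | left _ ih => exact .right ih
  | right _ ih => exact .left ih

lemma interleave_nil_right {α : Type u} {l₁ l : List α} (h : Interleave l₁ [] l) :
    l₁ = l := by
  generalize hm : ([] : List α) = m at h
  induction h with
  | nil => rfl
  | left _ ih => simp [ih hm]
  | right _ _ => cases hm

lemma interleave_append_split {α : Type u} {xs ys l₁ l₂ : List α}
    (h : Interleave l₁ l₂ (xs ++ ys)) :
    ∃ a₁ b₁ a₂ b₂, l₁ = a₁ ++ b₁ ∧ l₂ = a₂ ++ b₂ ∧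
      Interleave a₁ a₂ xs ∧ Interleave b₁ b₂ ys := by
  induction xs generalizing l₁ l₂ with
  | nil => exact ⟨[], l₁, [], l₂, rfl, rfl, .nil, h⟩
  | cons x xs ih =>
    cases h with
    | left h =>
      obtain ⟨a₁, b₁, a₂, b₂, h1, h2, h3, h4⟩ := ih h
      exact ⟨x :: a₁, b₁, a₂, b₂, by simp [h1], h2, .left h3, h4⟩
    | right h =>
      obtain ⟨a₁, b₁, a₂, b₂, h1, h2, h3, h4⟩ := ih h
      exact ⟨a₁, b₁, x :: a₂, b₂, h1, by simp [h2], .right h3, h4⟩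

lemma formalState_of_le {fm : σ → Bool} {S T : State σ} (h : T ≤ S)
    (hS : FormalState fm S) : FormalState fm T :=
  fun x hx => hS x (Multiset.mem_of_le h hx)

lemma minInit_le_append (a b : Pathway σ) : minInit a ≤ minInit (a ++ b) := by
  induction a with
  | nil => simp [minInit]
  | cons r a ih =>
    simp only [List.cons_append, minInit]
    exact add_le_add le_rfl (tsub_le_tsub_right ih _)

lemma finalFrom_append (S : State σ) (a b : Pathway σ) :
    finalFrom S (a ++ b) = finalFrom (finalFrom S a) b := by
  induction a generalizing S with
  | nil => rfl
  | cons r a ih => simp only [List.cons_append, finalFrom, ih, List.append_eq]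

lemma finalFrom_add (l : Pathway σ) : ∀ (S T : State σ), minInit l ≤ S →
    finalFrom (S + T) l = finalFrom S l + T := by
  induction l with
  | nil => intro S T _; rfl
  | cons r l ih =>
    intro S T h
    have hc := fun a => Multiset.le_iff_count.mp h a
    simp only [minInit, Multiset.count_add, Multiset.count_sub] at hc
    have h1 : applyRxn (S + T) r = applyRxn S r + T := by
      ext a
      simp only [applyRxn, Multiset.count_add, Multiset.count_sub]
      have := hc a; omega
    have h2 : minInit l ≤ applyRxn S r := by
      rw [Multiset.le_iff_count]
      intro a
      simp only [applyRxn, Multiset.count_add, Multiset.count_sub]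
      have := hc a; omega
    simp only [finalFrom, h1, ih _ _ h2]

lemma minInit_append (a b : Pathway σ) :
    minInit (a ++ b) = minInit a + (minInit b - finalFrom (minInit a) a) := by
  induction a with
  | nil => simp [minInit, finalFrom]
  | cons r a ih =>
    simp only [List.cons_append, minInit, finalFrom, List.append_eq]
    rw [ih]
    have key : applyRxn (r.1 + (minInit a - r.2)) r
        = (minInit a + (r.2 - minInit a)) := by
      ext x
      simp only [applyRxn, Multiset.count_add, Multiset.count_sub]
      omega
    rw [key, finalFrom_add a _ _ le_rfl]
    ext x
    simp only [Multiset.count_add, Multiset.count_sub]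
    omega

lemma formalPart_minInit_zero (fm : σ → Bool) (l : Pathway σ)
    (h : ∀ r ∈ l, formalPart fm r.1 = 0) : formalPart fm (minInit l) = 0 := by
  induction l with
  | nil => simp [minInit, formalPart]
  | cons r l ih =>
    have h1 : formalPart fm r.1 = 0 := h r (by simp)
    have h2 : formalPart fm (minInit l) = 0 := ih (fun r hr => h r (by simp [hr]))
    simp only [minInit, formalPart, Multiset.filter_add, Multiset.filter_sub] at *
    rw [h1, h2]; simp [zero_tsub]

/-- If `q` is a closing pathway for `p` and `b₁` is part of an interleaving of `q`
such that `p ++ b₁` is a formal pathway, then `b₁` is itself a closing pathway. -/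
lemma closing_of_formal_append (fm : σ → Bool) (C : Finset (Reaction σ))
    (p q b₁ b₂ : Pathway σ) (hq : ClosingPathway fm C p q) (hi : Interleave b₁ b₂ q)
    (hf : FormalPathway fm (p ++ b₁)) : ClosingPathway fm C p b₁ := by
  obtain ⟨hqC, hqle, hqnf, hqfin⟩ := hq
  have hb₁C : PathwayOf C b₁ := fun r hr => hqC r ((interleave_mem hi r).1 hr)
  have hb₁nf : ∀ r ∈ b₁, formalPart fm r.1 = 0 :=
    fun r hr => hqnf r ((interleave_mem hi r).1 hr)
  have hfmz : formalPart fm (minInit b₁) = 0 := formalPart_minInit_zero fm b₁ hb₁nf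
  have happ : minInit (p ++ b₁) = minInit p + (minInit b₁ - finalState p) :=
    minInit_append p b₁
  have hD_formal : FormalState fm (minInit b₁ - finalState p) := by
    refine formalState_of_le ?_ (happ ▸ hf.2.1)
    exact le_add_self
  have hD_part : formalPart fm (minInit b₁ - finalState p) = 0 := by
    have hle : formalPart fm (minInit b₁ - finalState p) ≤ formalPart fm (minInit b₁) :=
      Multiset.filter_le_filter _ (tsub_le_self)
    rw [hfmz] at hle
    exact le_antisymm hle zero_le
  have hD0 : minInit b₁ - finalState p = 0 := by
    refine Multiset.eq_zero_of_forall_notMem (fun x hx => ?_)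
    have : x ∈ formalPart fm (minInit b₁ - finalState p) :=
      Multiset.mem_filter.mpr ⟨hx, hD_formal x hx⟩
    rw [hD_part] at this
    exact absurd this (Multiset.notMem_zero x)
  have hle : minInit b₁ ≤ finalState p := tsub_eq_zero_iff_le.mp hD0
  have hmin_eq : minInit (p ++ b₁) = minInit p := by rw [happ, hD0, add_zero]
  have hfin : FormalState fm (finalFrom (finalState p) b₁) := by
    have := hf.2.2
    rwa [finalState, hmin_eq, finalFrom_append] at this
  exact ⟨hb₁C, hle, hb₁nf, hfin⟩

end Aux

/-- An undecomposable semiformal pathway with a strong closing pathway has a strong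
closing pathway `q` such that `p ++ q` is an undecomposable formal pathway. -/
theorem exists_closing_undecomposable {σ : Type} [DecidableEq σ] (fm : σ → Bool)
    (C : Finset (Reaction σ)) (hC : NontrivialRxns C)
    (p : Pathway σ) (hp : PathwayOf C p) (hs : Semiformal fm p)
    (hu : ¬ SDecomposable fm p) (q₀ : Pathway σ) (hq₀ : ClosingPathway fm C p q₀) :
    ∃ q : Pathway σ, ClosingPathway fm C p q ∧ ¬ FDecomposable fm (p ++ q) := by
  classical
  have hP : ∃ n, ∃ q : Pathway σ, ClosingPathway fm C p q ∧ q.length = n :=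
    ⟨q₀.length, q₀, hq₀, rfl⟩
  obtain ⟨q, hq, hqlen⟩ := Nat.find_spec hP
  refine ⟨q, hq, ?_⟩
  rintro ⟨q₁, q₂, hne₁, hne₂, hint, hf₁, hf₂⟩
  obtain ⟨a₁, b₁, a₂, b₂, e₁, e₂, hia, hib⟩ := interleave_append_split hint
  subst e₁ e₂
  have hsa₁ : Semiformal fm a₁ :=
    formalState_of_le (minInit_le_append a₁ b₁) hf₁.2.1
  have hsa₂ : Semiformal fm a₂ :=
    formalState_of_le (minInit_le_append a₂ b₂) hf₂.2.1
  have hcases : a₁ = [] ∨ a₂ = [] := by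
    by_contra hcon
    push_neg at hcon
    exact hu ⟨a₁, a₂, hcon.1, hcon.2, hia, hsa₁, hsa₂⟩
  rcases hcases with h0 | h0
  · -- a₁ = [], so q₂ = p ++ b₂ and b₂ is a shorter closing pathway
    subst h0
    have hap : a₂ = p := interleave_nil_right (interleave_swap hia)
    rw [hap] at hf₂
    have hcl : ClosingPathway fm C p b₂ :=
      closing_of_formal_append fm C p q b₂ b₁ hq (interleave_swap hib) hf₂
    have hlen : b₁.length + b₂.length = q.length := interleave_length hib
    have hb₁ne : b₁ ≠ [] := by simpa using hne₁
    have hlt : b₂.length < Nat.find hP := by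
      rw [← hqlen]
      have : 0 < b₁.length := List.length_pos_iff.mpr hb₁ne
      omega
    exact Nat.find_min hP hlt ⟨b₂, hcl, rfl⟩
  · -- a₂ = [], so q₁ = p ++ b₁ and b₁ is a shorter closing pathway
    subst h0
    have hap : a₁ = p := interleave_nil_right hia
    rw [hap] at hf₁
    have hcl : ClosingPathway fm C p b₁ :=
      closing_of_formal_append fm C p q b₁ b₂ hq hib hf₁
    have hlen : b₁.length + b₂.length = q.length := interleave_length hib
    have hb₂ne : b₂ ≠ [] := by simpa using hne₂
    have hlt : b₁.length < Nat.find hP := by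
      rw [← hqlen]
      have : 0 < b₂.length := List.length_pos_iff.mpr hb₂ne
      omega
    exact Nat.find_min hP hlt ⟨b₁, hcl, rfl⟩

end CRNVerif
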